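/- Let d ≥ 1, h ∈ ℝ, and v ∈ ℝ with v ≠ 0, sin(v) ≠ 0, cos(v/2) ≠ 0 and 2v + sin(2v) ≠ 0. Let H : ℝ^d → ℝ be continuously differentiable and B : ℝ^d → Matrix d d ℝ with B(y) skew-symmetric for every y. Suppose y₀, y₁ ∈ ℝ^d satisfy y₁ = y₀ + h·(2 sin(v/2)/v) · B( y₀ + (y₁ − y₀)/(2 cos(v/2)) ) · ∫₀¹ (4v·cos(v/2)·cos(vσ)/(2v + sin(2v))) · ∇H( y₀ + (sin(vσ)/sin(v))·(y₁ − y₀) ) dσ. Then H(y₁) = H(y₀). -/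

import Mathlib

open Matrix intervalIntegral

/-- **Energy preservation of the trigonometrically-fitted scheme FFEP1 (Example 2).**
If `y₁ = y₀ + h (2 sin(v/2)/v) B(y₀ + (y₁−y₀)/(2cos(v/2)))
∫₀¹ (4v cos(v/2) cos(vσ)/(2v + sin 2v)) ∇H(y₀ + (sin(vσ)/sin v)(y₁−y₀)) dσ`
with `B(y)` skew-symmetric, then `H(y₁) = H(y₀)`. -/
theorem ffep1_energy_preservation
    (d : ℕ) (hd : 1 ≤ d) (h v : ℝ)
    (hv : v ≠ 0) (hsin : Real.sin v ≠ 0) (hcos : Real.cos (v / 2) ≠ 0)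
    (hden : 2 * v + Real.sin (2 * v) ≠ 0)
    (H : EuclideanSpace ℝ (Fin d) → ℝ) (hH : ContDiff ℝ 1 H)
    (B : EuclideanSpace ℝ (Fin d) → Matrix (Fin d) (Fin d) ℝ)
    (hB : ∀ y, (B y)ᵀ = -(B y))
    (y₀ y₁ : EuclideanSpace ℝ (Fin d))
    (hy : y₁ = y₀ + (h * (2 * Real.sin (v / 2) / v)) • (WithLp.equiv 2 (Fin d → ℝ)).symm
      ((B (y₀ + (2 * Real.cos (v / 2))⁻¹ • (y₁ - y₀))).mulVec
        (fun j => (∫ σ in (0:ℝ)..1,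
          (4 * v * Real.cos (v / 2) * Real.cos (v * σ) / (2 * v + Real.sin (2 * v))) •
            gradient H (y₀ + (Real.sin (v * σ) / Real.sin v) • (y₁ - y₀))) j))) :
    H y₁ = H y₀ := by
  classical
  set Δ : EuclideanSpace ℝ (Fin d) := y₁ - y₀ with hΔ
  set γ : ℝ → EuclideanSpace ℝ (Fin d) :=
    fun σ => y₀ + (Real.sin (v * σ) / Real.sin v) • Δ with hγdef
  set G : ℝ → EuclideanSpace ℝ (Fin d) := fun σ => gradient H (γ σ) with hGdef
  set K : ℝ := 4 * v * Real.cos (v / 2) / (2 * v + Real.sin (2 * v)) with hK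
  set c : ℝ := h * (2 * Real.sin (v / 2) / v) with hc
  set z : EuclideanSpace ℝ (Fin d) := y₀ + (2 * Real.cos (v / 2))⁻¹ • Δ with hz
  have hdiff : Differentiable ℝ H := hH.differentiable one_ne_zero
  -- continuity of G
  have hγcont : Continuous γ := by
    apply Continuous.add continuous_const
    exact ((Real.continuous_sin.comp (continuous_const.mul continuous_id)).div_const _).smul
      continuous_const
  have hgradcont : Continuous (fun x => gradient H x) := by
    simp only [gradient]
    exact (InnerProductSpace.toDual ℝ _).symm.continuous.comp (hH.continuous_fderiv one_ne_zero)
  have hGcont : Continuous G := hgradcont.comp hγcont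
  -- derivative of γ
  have hγ' : ∀ σ : ℝ, HasDerivAt γ ((v * Real.cos (v * σ) / Real.sin v) • Δ) σ := by
    intro σ
    have h1 : HasDerivAt (fun σ : ℝ => v * σ) v σ := by
      simpa using (hasDerivAt_id σ).const_mul v
    have h2 : HasDerivAt (fun σ : ℝ => Real.sin (v * σ)) (Real.cos (v * σ) * v) σ :=
      (Real.hasDerivAt_sin (v * σ)).comp σ h1
    have h3 := ((h2.div_const (Real.sin v)).smul_const Δ).const_add y₀
    rw [mul_comm (Real.cos (v * σ)) v] at h3
    exact h3
  -- derivative of H ∘ γ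
  have hcomp : ∀ σ : ℝ, HasDerivAt (fun σ => H (γ σ))
      ((v * Real.cos (v * σ) / Real.sin v) * inner ℝ (G σ) Δ) σ := by
    intro σ
    have hg : HasGradientAt H (G σ) (γ σ) := (hdiff (γ σ)).hasGradientAt
    have := hg.hasFDerivAt.comp_hasDerivAt σ (hγ' σ)
    refine this.congr_deriv ?_
    simp [InnerProductSpace.toDual_apply_apply, inner_smul_right, real_inner_comm]
  have hγ0 : γ 0 = y₀ := by simp [hγdef]
  have hγ1 : γ 1 = y₁ := by
    simp [hγdef, div_self hsin, hΔ]
  -- FTC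
  have hintcont : Continuous fun σ =>
      (v * Real.cos (v * σ) / Real.sin v) * inner ℝ (G σ) Δ := by
    apply Continuous.mul
    · exact (continuous_const.mul (Real.continuous_cos.comp
        (continuous_const.mul continuous_id))).div_const _
    · exact (continuous_inner.comp (hGcont.prodMk continuous_const))
  have hFTC : H y₁ - H y₀ = ∫ σ in (0:ℝ)..1,
      (v * Real.cos (v * σ) / Real.sin v) * inner ℝ (G σ) Δ := by
    rw [← hγ0, ← hγ1]
    exact (integral_eq_sub_of_hasDerivAt (fun σ _ => hcomp σ)
      (hintcont.intervalIntegrable _ _)).symm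
  -- componentwise integrals
  set u : Fin d → ℝ := fun j => ∫ σ in (0:ℝ)..1, Real.cos (v * σ) * G σ j with hu
  have hGjcont : ∀ j, Continuous (fun σ => G σ j) := fun j =>
    (EuclideanSpace.proj j).continuous.comp hGcont
  set w : Fin d → ℝ := fun j => (∫ σ in (0:ℝ)..1,
      (4 * v * Real.cos (v / 2) * Real.cos (v * σ) / (2 * v + Real.sin (2 * v))) •
        gradient H (y₀ + (Real.sin (v * σ) / Real.sin v) • (y₁ - y₀))) j with hw
  have hwj : ∀ j, w j = K * u j := by
    intro j
    have hfc : Continuous (fun σ : ℝ => (K * Real.cos (v * σ)) • G σ) := by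
      exact ((continuous_const.mul (Real.continuous_cos.comp
        (continuous_const.mul continuous_id))).smul hGcont)
    have hfi : IntervalIntegrable (fun σ : ℝ => (K * Real.cos (v * σ)) • G σ)
        MeasureTheory.volume 0 1 := hfc.intervalIntegrable _ _
    have heq : (fun σ : ℝ => (4 * v * Real.cos (v / 2) * Real.cos (v * σ) /
          (2 * v + Real.sin (2 * v))) •
        gradient H (y₀ + (Real.sin (v * σ) / Real.sin v) • (y₁ - y₀)))
        = fun σ : ℝ => (K * Real.cos (v * σ)) • G σ := by
      funext σ
      simp only [hK, hGdef, hγdef, hΔ]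
      ring_nf
    have := (EuclideanSpace.proj j).intervalIntegral_comp_comm hfi
    rw [hw]
    simp only [heq]
    rw [show ((∫ σ in (0:ℝ)..1, (K * Real.cos (v * σ)) • G σ) j)
        = EuclideanSpace.proj j (∫ σ in (0:ℝ)..1, (K * Real.cos (v * σ)) • G σ) from rfl,
      ← this]
    rw [show (fun σ : ℝ => EuclideanSpace.proj j ((K * Real.cos (v * σ)) • G σ))
        = fun σ : ℝ => K * (Real.cos (v * σ) * G σ j) by funext σ; simp; ring]
    rw [intervalIntegral.integral_const_mul]
  -- Δ componentwise
  have hΔj : ∀ j, Δ j = c * Matrix.mulVec (B z) w j := by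
    intro j
    have : Δ = c • (WithLp.equiv 2 (Fin d → ℝ)).symm ((B z).mulVec w) := by
      rw [hΔ]; nth_rewrite 1 [hy]; abel
    rw [this]
    rfl
  -- rewrite inner as sum and swap
  have hinner : ∀ σ : ℝ, (inner ℝ (G σ) Δ : ℝ) = ∑ j, G σ j * Δ j := by
    intro σ
    rw [PiLp.inner_apply]
    simp [RCLike.inner_apply, mul_comm]
  have hsum : (∫ σ in (0:ℝ)..1, (v * Real.cos (v * σ) / Real.sin v) * inner ℝ (G σ) Δ)
      = ∑ j, (v / Real.sin v) * Δ j * u j := by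
    have h1 : (fun σ : ℝ => (v * Real.cos (v * σ) / Real.sin v) * inner ℝ (G σ) Δ)
        = fun σ => ∑ j, (v / Real.sin v) * Δ j * (Real.cos (v * σ) * G σ j) := by
      funext σ
      rw [hinner σ, Finset.mul_sum]
      congr 1; funext j; ring
    rw [h1, intervalIntegral.integral_finset_sum]
    · congr 1; funext j
      rw [intervalIntegral.integral_const_mul]
    · intro j _
      exact (continuous_const.mul ((Real.continuous_cos.comp
        (continuous_const.mul continuous_id)).mul (hGjcont j))).intervalIntegrable _ _
  -- skew symmetry kills the sum
  have hdot : Matrix.mulVec (B z) u ⬝ᵥ u = 0 := by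
    have h1 : Matrix.mulVec (B z) u ⬝ᵥ u = u ⬝ᵥ Matrix.mulVec (B z) u :=
      dotProduct_comm _ _
    have h2 : u ⬝ᵥ Matrix.mulVec (B z) u = Matrix.vecMul u (B z) ⬝ᵥ u :=
      Matrix.dotProduct_mulVec _ _ _
    have h3 : Matrix.vecMul u (B z) = Matrix.mulVec (B z)ᵀ u :=
      (Matrix.mulVec_transpose _ _).symm
    have h4 : Matrix.mulVec (B z)ᵀ u = -Matrix.mulVec (B z) u := by
      rw [hB z, Matrix.neg_mulVec]
    have : Matrix.mulVec (B z) u ⬝ᵥ u = -(Matrix.mulVec (B z) u ⬝ᵥ u) := by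
      nth_rewrite 1 [h1, h2, h3, h4]
      rw [neg_dotProduct]
    linarith
  have hfin : ∑ j, (v / Real.sin v) * Δ j * u j = 0 := by
    have : ∀ j, (v / Real.sin v) * Δ j * u j
        = (v / Real.sin v) * c * K * (Matrix.mulVec (B z) u j * u j) := by
      intro j
      rw [hΔj j]
      have hwu : w = fun j => K * u j := funext hwj
      rw [show Matrix.mulVec (B z) w = K • Matrix.mulVec (B z) u by
        rw [hwu, show (fun j => K * u j) = K • u from rfl, Matrix.mulVec_smul]]
      simp [Pi.smul_apply, smul_eq_mul]
      ring
    rw [Finset.sum_congr rfl (fun j _ => this j), ← Finset.mul_sum]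
    have : ∑ j, Matrix.mulVec (B z) u j * u j = Matrix.mulVec (B z) u ⬝ᵥ u := rfl
    rw [this, hdot, mul_zero]
  have := hFTC
  rw [hsum, hfin] at this
  linarith
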